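/- Let n be a positive integer. For all functions f and g in the complex linear span of {e_j : j ∈ Λ_n^†}, one has (1/(2n³)) · Σ_{k ∈ X_n} f(k/(2n)) · conj(g(k/(2n))) = ∫_{[−1/2,1/2]³} f(x) · conj(g(x)) dx. -/

import Mathlib

open MeasureTheory Complex

attribute [local instance] Classical.propDecidable

/-- The exponential e_k(x) = exp(2 pi i (k1 x1 + k2 x2 + k3 x3)). -/
noncomputable def e3 (k : ℤ × ℤ × ℤ) (x : ℝ × ℝ × ℝ) : ℂ :=
  Complex.exp (2 * Real.pi * Complex.I *
    ((k.1 : ℂ) * x.1 + (k.2.1 : ℂ) * x.2.1 + (k.2.2 : ℂ) * x.2.2))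

/-- The point k/(2n) in three-space. -/
noncomputable def pt3 (n : ℕ) (k : ℤ × ℤ × ℤ) : ℝ × ℝ × ℝ :=
  ((k.1 : ℝ) / (2 * n), (k.2.1 : ℝ) / (2 * n), (k.2.2 : ℝ) / (2 * n))

/-- The cube of integer points with coordinates in [-m, m]. -/
noncomputable def box3 (m : ℕ) : Finset (ℤ × ℤ × ℤ) :=
  Finset.Icc (-(m : ℤ), -(m : ℤ), -(m : ℤ)) ((m : ℤ), (m : ℤ), (m : ℤ))

/-- Λ_n^† = {k : -n ≤ k_ν ± k_μ < n for all ν < μ}. -/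
noncomputable def LamDag (n : ℕ) : Finset (ℤ × ℤ × ℤ) :=
  (box3 n).filter fun k =>
    (-(n : ℤ) ≤ k.1 + k.2.1 ∧ k.1 + k.2.1 < (n : ℤ)) ∧
    (-(n : ℤ) ≤ k.1 - k.2.1 ∧ k.1 - k.2.1 < (n : ℤ)) ∧
    (-(n : ℤ) ≤ k.1 + k.2.2 ∧ k.1 + k.2.2 < (n : ℤ)) ∧
    (-(n : ℤ) ≤ k.1 - k.2.2 ∧ k.1 - k.2.2 < (n : ℤ)) ∧
    (-(n : ℤ) ≤ k.2.1 + k.2.2 ∧ k.2.1 + k.2.2 < (n : ℤ)) ∧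
    (-(n : ℤ) ≤ k.2.1 - k.2.2 ∧ k.2.1 - k.2.2 < (n : ℤ))

/-- X_n = {k : k1 ≡ k2 ≡ k3 (mod 2), -n ≤ k_i < n}. -/
noncomputable def X3 (n : ℕ) : Finset (ℤ × ℤ × ℤ) :=
  (box3 n).filter fun k =>
    k.1 % 2 = k.2.1 % 2 ∧ k.2.1 % 2 = k.2.2 % 2 ∧
    k.1 < (n : ℤ) ∧ k.2.1 < (n : ℤ) ∧ k.2.2 < (n : ℤ)

lemma e3_add (j l : ℤ × ℤ × ℤ) (x : ℝ × ℝ × ℝ) : e3 (j + l) x = e3 j x * e3 l x := by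
  simp only [e3, ← Complex.exp_add, Prod.fst_add, Prod.snd_add]
  push_cast
  ring_nf

lemma star_e3 (l : ℤ × ℤ × ℤ) (x : ℝ × ℝ × ℝ) : star (e3 l x) = e3 (-l) x := by
  have : ∀ z : ℂ, star (Complex.exp z) = Complex.exp (starRingEnd ℂ z) := fun z =>
    (Complex.exp_conj z).symm
  simp only [e3, this, map_mul, map_add, Complex.conj_I, Prod.fst_neg, Prod.snd_neg,
    Complex.conj_ofReal, map_ofNat, map_intCast]
  push_cast
  ring_nf

lemma continuous_e3 (m : ℤ × ℤ × ℤ) : Continuous (e3 m) := by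
  unfold e3; fun_prop

lemma integral1 (m : ℤ) : (∫ x in Set.Icc (-(1:ℝ)/2) (1/2), Complex.exp (2*(Real.pi:ℂ)*Complex.I*(m*x))) = if m = 0 then 1 else 0 := by
  rw [integral_Icc_eq_integral_Ioc, ← intervalIntegral.integral_of_le (by norm_num)]
  by_cases hm : m = 0
  · rw [if_pos hm]; simp [hm]; norm_num
  · rw [if_neg hm]
    have hc : (2*(Real.pi:ℂ)*Complex.I*m) ≠ 0 := by
      simp [Real.pi_ne_zero, Complex.I_ne_zero, hm]
    have h2 := integral_exp_mul_complex (a := -(1:ℝ)/2) (b := 1/2) hc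
    simp only [show ∀ x:ℝ, 2*(Real.pi:ℂ)*Complex.I*((m:ℂ)*x) = (2*(Real.pi:ℂ)*Complex.I*(m:ℂ))*x from fun x => by ring]
    rw [h2]
    have : cexp (2 * (Real.pi:ℂ) * I * m * ((1:ℝ)/2 : ℝ)) = cexp (2 * (Real.pi:ℂ) * I * m * ((-1/2 : ℝ) : ℝ)) := by
      rw [Complex.exp_eq_exp_iff_exists_int]
      exact ⟨m, by push_cast; ring⟩
    rw [this]; simp

lemma integral_e3' (m : ℤ × ℤ × ℤ) :
    (∫ x in Set.Icc ((-(1:ℝ)/2, -(1:ℝ)/2, -(1:ℝ)/2)) (((1:ℝ)/2, (1:ℝ)/2, (1:ℝ)/2)),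
      (cexp (2*(Real.pi:ℂ)*I*(m.1*x.1)) * (cexp (2*(Real.pi:ℂ)*I*(m.2.1*x.2.1)) * cexp (2*(Real.pi:ℂ)*I*(m.2.2*x.2.2)))))
    = (if m.1 = 0 then 1 else 0) * ((if m.2.1 = 0 then 1 else 0) * (if m.2.2 = 0 then 1 else 0)) := by
  have hF : ∀ a : ℤ, Continuous (fun t : ℝ => cexp (2*(Real.pi:ℂ)*I*(a*t))) := by
    intro a; fun_prop
  rw [Set.Icc_prod_eq, Set.Icc_prod_eq, Measure.volume_eq_prod]
  rw [setIntegral_prod]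
  · simp only [integral_const_mul]
    rw [← integral1 m.1, ← integral_mul_const]
    congr 1; ext x; congr 1
    rw [Measure.volume_eq_prod, setIntegral_prod]
    · simp only [integral_const_mul, integral_mul_const]
      rw [← integral1 m.2.1, ← integral1 m.2.2]
    · exact (((hF m.2.1).comp continuous_fst).mul ((hF m.2.2).comp continuous_snd)).continuousOn.integrableOn_compact
        (isCompact_Icc.prod isCompact_Icc)
  · exact (((hF m.1).comp continuous_fst).mul
      (((hF m.2.1).comp (continuous_fst.comp continuous_snd)).mul
       ((hF m.2.2).comp (continuous_snd.comp continuous_snd)))).continuousOn.integrableOn_compact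
      (isCompact_Icc.prod (isCompact_Icc.prod isCompact_Icc))

noncomputable def Em (n : ℕ) (z : ℤ) : ℂ := Complex.exp (Real.pi * Complex.I * z / n)

lemma Em_add (n : ℕ) (z w : ℤ) : Em n (z + w) = Em n z * Em n w := by
  rw [Em, Em, Em, ← Complex.exp_add]
  congr 1
  push_cast
  ring

lemma Em_zero (n : ℕ) : Em n 0 = 1 := by simp [Em]

lemma Em_pow (n : ℕ) (z : ℤ) (a : ℕ) : Em n (z * a) = (Em n z) ^ a := by
  rw [Em, Em, ← Complex.exp_nat_mul]
  congr 1
  push_cast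
  ring

lemma Em_n (n : ℕ) (hn : 0 < n) : Em n n = -1 := by
  have hn' : (n:ℂ) ≠ 0 := Nat.cast_ne_zero.mpr hn.ne'
  rw [Em]
  push_cast
  rw [mul_div_assoc, div_self hn', mul_one, Complex.exp_pi_mul_I]

lemma Em_neg_n (n : ℕ) (hn : 0 < n) : Em n (-n) = -1 := by
  have h := Em_add n n (-n)
  simp only [add_neg_cancel, Em_zero] at h
  rw [Em_n n hn] at h
  linear_combination h

lemma Em_one_of_dvd (n : ℕ) (hn : 0 < n) (z : ℤ) (h : (2*(n:ℤ)) ∣ z) : Em n z = 1 := by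
  obtain ⟨q, rfl⟩ := h
  have hn' : (n:ℂ) ≠ 0 := Nat.cast_ne_zero.mpr hn.ne'
  rw [Em, show (Real.pi : ℂ) * Complex.I * ((2 * (n:ℤ) * q : ℤ) : ℂ) / n = (q:ℤ) * (2 * Real.pi * Complex.I) by push_cast; field_simp]
  exact Complex.exp_int_mul_two_pi_mul_I q

lemma sum_G (n : ℕ) (hn : 0 < n) (m : ℤ) :
    ∑ a ∈ Finset.range n, Em n (2 * m * a) = if (n:ℤ) ∣ m then (n:ℂ) else 0 := by
  simp only [show ∀ a : ℕ, (2 * m * (a:ℤ)) = (2*m) * (a:ℤ) from fun a => by ring, Em_pow]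
  by_cases h : (n:ℤ) ∣ m
  · obtain ⟨q, hq⟩ := h
    rw [Em_one_of_dvd n hn _ ⟨q, by rw [hq]; ring⟩]
    rw [if_pos ⟨q, hq⟩]
    simp
  · rw [if_neg h]
    have hr : Em n (2 * m) ≠ 1 := by
      intro hr
      rw [Em, Complex.exp_eq_one_iff] at hr
      obtain ⟨k, hk⟩ := hr
      apply h
      refine ⟨k, ?_⟩
      have hn' : (n:ℂ) ≠ 0 := Nat.cast_ne_zero.mpr hn.ne'
      have h2πI : (2:ℂ) * Real.pi * Complex.I ≠ 0 := by
        simp [Real.pi_ne_zero, Complex.I_ne_zero]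
      have hm : (m:ℂ) = n * k := by
        apply mul_left_cancel₀ h2πI
        push_cast at hk
        field_simp at hk
        linear_combination (2 * (Real.pi:ℂ) * Complex.I) * hk
      exact_mod_cast hm
    rw [geom_sum_eq hr]
    have : Em n (2 * m) ^ n = 1 := by
      rw [← Em_pow]
      exact Em_one_of_dvd n hn _ ⟨m, by ring⟩
    rw [this]
    simp

lemma mem_X3 (n : ℕ) (k : ℤ × ℤ × ℤ) :
    k ∈ X3 n ↔ (k.1 % 2 = k.2.1 % 2 ∧ k.2.1 % 2 = k.2.2 % 2 ∧
      (-(n:ℤ) ≤ k.1 ∧ k.1 < n) ∧ (-(n:ℤ) ≤ k.2.1 ∧ k.2.1 < n) ∧ (-(n:ℤ) ≤ k.2.2 ∧ k.2.2 < n)) := by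
  simp only [X3, box3, Finset.mem_filter, Finset.mem_Icc, Prod.le_def]
  constructor
  · rintro ⟨⟨⟨h1, h2, h3⟩, h4, h5, h6⟩, p1, p2, l1, l2, l3⟩
    exact ⟨p1, p2, ⟨h1, l1⟩, ⟨h2, l2⟩, ⟨h3, l3⟩⟩
  · rintro ⟨p1, p2, ⟨a1, b1⟩, ⟨a2, b2⟩, ⟨a3, b3⟩⟩
    exact ⟨⟨⟨a1, a2, a3⟩, by omega, by omega, by omega⟩, p1, p2, b1, b2, b3⟩

lemma sum_X3_eq (n : ℕ) (F : ℤ × ℤ × ℤ → ℂ) :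
    ∑ k ∈ X3 n, F k
      = ∑ t ∈ Finset.range 2, ∑ a ∈ Finset.range n, ∑ b ∈ Finset.range n, ∑ c ∈ Finset.range n,
          F (2*(a:ℤ)+(t:ℤ)-(n:ℤ), 2*(b:ℤ)+(t:ℤ)-(n:ℤ), 2*(c:ℤ)+(t:ℤ)-(n:ℤ)) := by
  rw [show (∑ t ∈ Finset.range 2, ∑ a ∈ Finset.range n, ∑ b ∈ Finset.range n, ∑ c ∈ Finset.range n,
          F (2*(a:ℤ)+(t:ℤ)-(n:ℤ), 2*(b:ℤ)+(t:ℤ)-(n:ℤ), 2*(c:ℤ)+(t:ℤ)-(n:ℤ)))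
      = ∑ p ∈ Finset.range 2 ×ˢ (Finset.range n ×ˢ (Finset.range n ×ˢ Finset.range n)),
          F (2*(p.2.1:ℤ)+(p.1:ℤ)-(n:ℤ), 2*(p.2.2.1:ℤ)+(p.1:ℤ)-(n:ℤ), 2*(p.2.2.2:ℤ)+(p.1:ℤ)-(n:ℤ)) from by
        rw [Finset.sum_product]
        refine Finset.sum_congr rfl fun t _ => ?_
        rw [Finset.sum_product]
        refine Finset.sum_congr rfl fun a _ => ?_
        rw [Finset.sum_product]]
  refine Finset.sum_nbij' (s := X3 n)
    (t := Finset.range 2 ×ˢ (Finset.range n ×ˢ (Finset.range n ×ˢ Finset.range n)))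
    (f := F)
    (g := fun p : ℕ×ℕ×ℕ×ℕ => F (2*(p.2.1:ℤ)+(p.1:ℤ)-(n:ℤ), 2*(p.2.2.1:ℤ)+(p.1:ℤ)-(n:ℤ), 2*(p.2.2.2:ℤ)+(p.1:ℤ)-(n:ℤ)))
    (i := fun (k : ℤ×ℤ×ℤ) => ((((k.1+n) % 2).toNat, ((k.1+n)/2).toNat, ((k.2.1+n)/2).toNat, ((k.2.2+n)/2).toNat) : ℕ×ℕ×ℕ×ℕ))
    (j := fun p => ((2*(p.2.1:ℤ)+(p.1:ℤ)-(n:ℤ), 2*(p.2.2.1:ℤ)+(p.1:ℤ)-(n:ℤ), 2*(p.2.2.2:ℤ)+(p.1:ℤ)-(n:ℤ)) : ℤ×ℤ×ℤ))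
    ?_ ?_ ?_ ?_ ?_
  · rintro ⟨k1, k2, k3⟩ hk
    rw [mem_X3] at hk
    dsimp only at hk ⊢
    simp only [Finset.mem_product, Finset.mem_range]
    omega
  · rintro ⟨t, a, b, c⟩ hp
    simp only [Finset.mem_product, Finset.mem_range] at hp
    rw [mem_X3]
    dsimp only
    refine ⟨by omega, by omega, by omega, by omega, by omega⟩
  · rintro ⟨k1, k2, k3⟩ hk
    rw [mem_X3] at hk
    dsimp only at hk ⊢
    simp only [Prod.mk.injEq]
    refine ⟨by omega, by omega, by omega⟩
  · rintro ⟨t, a, b, c⟩ hp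
    simp only [Finset.mem_product, Finset.mem_range] at hp
    dsimp only
    simp only [Prod.mk.injEq]
    refine ⟨by omega, by omega, by omega, by omega⟩
  · rintro ⟨k1, k2, k3⟩ hk
    rw [mem_X3] at hk
    dsimp only at hk ⊢
    have e1 : (2 * ((((k1+n)/2).toNat : ℕ) : ℤ) + ((((k1+n) % 2).toNat : ℕ) : ℤ) - n) = k1 := by omega
    have e2 : (2 * ((((k2+n)/2).toNat : ℕ) : ℤ) + ((((k1+n) % 2).toNat : ℕ) : ℤ) - n) = k2 := by omega
    have e3 : (2 * ((((k3+n)/2).toNat : ℕ) : ℤ) + ((((k1+n) % 2).toNat : ℕ) : ℤ) - n) = k3 := by omega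
    rw [e1, e2, e3]


lemma e3_pt3 (n : ℕ) (hn : 0 < n) (m k : ℤ × ℤ × ℤ) :
    e3 m (pt3 n k) = Em n (m.1*k.1 + m.2.1*k.2.1 + m.2.2*k.2.2) := by
  have hn' : (n:ℂ) ≠ 0 := Nat.cast_ne_zero.mpr hn.ne'
  rw [e3, Em, pt3]
  congr 1
  push_cast
  field_simp

lemma sum_e3_X3 (n : ℕ) (hn : 0 < n) (m : ℤ × ℤ × ℤ)
    (h1 : -(2*(n:ℤ)) < m.1 + m.2.1) (h2 : m.1 + m.2.1 < 2*n)
    (h3 : -(2*(n:ℤ)) < m.1 - m.2.1) (h4 : m.1 - m.2.1 < 2*n)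
    (h5 : -(2*(n:ℤ)) < m.1 + m.2.2) (h6 : m.1 + m.2.2 < 2*n)
    (h7 : -(2*(n:ℤ)) < m.1 - m.2.2) (h8 : m.1 - m.2.2 < 2*n)
    (h9 : -(2*(n:ℤ)) < m.2.1 + m.2.2) (h10 : m.2.1 + m.2.2 < 2*n)
    (h11 : -(2*(n:ℤ)) < m.2.1 - m.2.2) (h12 : m.2.1 - m.2.2 < 2*n) :
    ∑ k ∈ X3 n, e3 m (pt3 n k) = if m = 0 then 2*(n:ℂ)^3 else 0 := by
  obtain ⟨m1, m2, m3⟩ := m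
  simp only at h1 h2 h3 h4 h5 h6 h7 h8 h9 h10 h11 h12
  simp only [e3_pt3 n hn]
  rw [sum_X3_eq n (fun k => Em n (m1*k.1 + m2*k.2.1 + m3*k.2.2))]
  have key : ∀ t a b c : ℕ,
      Em n (m1*(2*(a:ℤ)+(t:ℤ)-(n:ℤ)) + m2*(2*(b:ℤ)+(t:ℤ)-(n:ℤ)) + m3*(2*(c:ℤ)+(t:ℤ)-(n:ℤ)))
        = Em n (2*m1*a) * (Em n (2*m2*b) * (Em n (2*m3*c) * Em n ((m1+m2+m3)*((t:ℤ)-(n:ℤ))))) := by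
    intro t a b c
    rw [← Em_add, ← Em_add, ← Em_add]
    congr 1
    ring
  simp only
  simp only [key]
  simp only [← Finset.mul_sum, ← Finset.sum_mul]
  simp only [sum_G n hn m1, sum_G n hn m2, sum_G n hn m3]
  rw [Finset.sum_range_succ, Finset.sum_range_one]
  by_cases hm0 : (m1, m2, m3) = (0 : ℤ × ℤ × ℤ)
  · rw [if_pos hm0]
    obtain ⟨rfl, rfl, rfl⟩ : m1 = 0 ∧ m2 = 0 ∧ m3 = 0 := by
      simpa [Prod.ext_iff] using hm0
    simp only [if_pos (dvd_zero (n:ℤ)), zero_add, zero_mul, Em_zero]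
    push_cast
    ring
  · rw [if_neg hm0]
    by_cases hd1 : (n:ℤ) ∣ m1
    · by_cases hd2 : (n:ℤ) ∣ m2
      · by_cases hd3 : (n:ℤ) ∣ m3
        · -- all divisible: cancellation between t = 0 and t = 1
          obtain ⟨q1, rfl⟩ := hd1
          obtain ⟨q2, rfl⟩ := hd2
          obtain ⟨q3, rfl⟩ := hd3
          have hn0 : (0:ℤ) ≤ n := by positivity
          have hnq : ¬(q1 = 0 ∧ q2 = 0 ∧ q3 = 0) := by
            rintro ⟨rfl, rfl, rfl⟩
            exact hm0 (by simp)
          have b1 : q1 + q2 < 2 := lt_of_mul_lt_mul_left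
            (show (n:ℤ)*(q1+q2) < (n:ℤ)*2 by rw [mul_add]; linarith) hn0
          have b2 : -2 < q1 + q2 := lt_of_mul_lt_mul_left
            (show (n:ℤ)*(-2) < (n:ℤ)*(q1+q2) by rw [mul_add]; linarith) hn0
          have b3 : q1 - q2 < 2 := lt_of_mul_lt_mul_left
            (show (n:ℤ)*(q1-q2) < (n:ℤ)*2 by rw [mul_sub]; linarith) hn0
          have b4 : -2 < q1 - q2 := lt_of_mul_lt_mul_left
            (show (n:ℤ)*(-2) < (n:ℤ)*(q1-q2) by rw [mul_sub]; linarith) hn0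
          have b5 : q1 + q3 < 2 := lt_of_mul_lt_mul_left
            (show (n:ℤ)*(q1+q3) < (n:ℤ)*2 by rw [mul_add]; linarith) hn0
          have b6 : -2 < q1 + q3 := lt_of_mul_lt_mul_left
            (show (n:ℤ)*(-2) < (n:ℤ)*(q1+q3) by rw [mul_add]; linarith) hn0
          have b7 : q1 - q3 < 2 := lt_of_mul_lt_mul_left
            (show (n:ℤ)*(q1-q3) < (n:ℤ)*2 by rw [mul_sub]; linarith) hn0
          have b8 : -2 < q1 - q3 := lt_of_mul_lt_mul_left
            (show (n:ℤ)*(-2) < (n:ℤ)*(q1-q3) by rw [mul_sub]; linarith) hn0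
          have b9 : q2 + q3 < 2 := lt_of_mul_lt_mul_left
            (show (n:ℤ)*(q2+q3) < (n:ℤ)*2 by rw [mul_add]; linarith) hn0
          have b10 : -2 < q2 + q3 := lt_of_mul_lt_mul_left
            (show (n:ℤ)*(-2) < (n:ℤ)*(q2+q3) by rw [mul_add]; linarith) hn0
          have b11 : q2 - q3 < 2 := lt_of_mul_lt_mul_left
            (show (n:ℤ)*(q2-q3) < (n:ℤ)*2 by rw [mul_sub]; linarith) hn0
          have b12 : -2 < q2 - q3 := lt_of_mul_lt_mul_left
            (show (n:ℤ)*(-2) < (n:ℤ)*(q2-q3) by rw [mul_sub]; linarith) hn0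
          have hq : q1 + q2 + q3 = 1 ∨ q1 + q2 + q3 = -1 := by omega
          have hs : (n:ℤ)*q1 + (n:ℤ)*q2 + (n:ℤ)*q3 = n ∨ (n:ℤ)*q1 + (n:ℤ)*q2 + (n:ℤ)*q3 = -(n:ℤ) := by
            rcases hq with h | h
            · left; rw [← mul_add, ← mul_add, h, mul_one]
            · right; rw [← mul_add, ← mul_add, h]; ring
          have hEs : Em n ((n:ℤ)*q1 + (n:ℤ)*q2 + (n:ℤ)*q3) = -1 := by
            rcases hs with h | h
            · rw [h, Em_n n hn]
            · rw [h, Em_neg_n n hn]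
          have hcancel : Em n (((n:ℤ)*q1 + (n:ℤ)*q2 + (n:ℤ)*q3) * (((1:ℕ):ℤ) - (n:ℤ)))
              = Em n (((n:ℤ)*q1 + (n:ℤ)*q2 + (n:ℤ)*q3) * (((0:ℕ):ℤ) - (n:ℤ))) * -1 := by
            rw [← hEs, ← Em_add]
            congr 1
            norm_num
            ring
          rw [hcancel]
          ring
        · rw [if_neg hd3]; ring
      · rw [if_neg hd2]; ring
    · rw [if_neg hd1]; ring


lemma cube_integrable (h : ℝ × ℝ × ℝ → ℂ) (hc : Continuous h) :
    IntegrableOn h (Set.Icc ((-(1:ℝ)/2, -(1:ℝ)/2, -(1:ℝ)/2)) (((1:ℝ)/2, (1:ℝ)/2, (1:ℝ)/2))) :=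
  hc.continuousOn.integrableOn_compact isCompact_Icc

lemma key_lemma (n : ℕ) (hn : 0 < n) (j l : ℤ × ℤ × ℤ)
    (hj : j ∈ LamDag n) (hl : l ∈ LamDag n) :
    (1 / (2 * (n : ℂ) ^ 3)) * ∑ k ∈ X3 n, e3 j (pt3 n k) * star (e3 l (pt3 n k))
      = ∫ x in Set.Icc ((-(1:ℝ)/2, -(1:ℝ)/2, -(1:ℝ)/2)) (((1:ℝ)/2, (1:ℝ)/2, (1:ℝ)/2)),
          e3 j x * star (e3 l x) := by
  have hn' : (n:ℂ) ≠ 0 := Nat.cast_ne_zero.mpr hn.ne'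
  simp only [star_e3, ← e3_add]
  simp only [LamDag, box3, Finset.mem_filter, Finset.mem_Icc, Prod.le_def] at hj hl
  obtain ⟨⟨⟨ja1, ja2, ja3⟩, jb1, jb2, jb3⟩, ⟨jc1, jc2⟩, ⟨jc3, jc4⟩, ⟨jc5, jc6⟩, ⟨jc7, jc8⟩, ⟨jc9, jc10⟩, jc11, jc12⟩ := hj
  obtain ⟨⟨⟨la1, la2, la3⟩, lb1, lb2, lb3⟩, ⟨lc1, lc2⟩, ⟨lc3, lc4⟩, ⟨lc5, lc6⟩, ⟨lc7, lc8⟩, ⟨lc9, lc10⟩, lc11, lc12⟩ := hl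
  rw [sum_e3_X3 n hn (j + -l) (by simp; omega) (by simp; omega) (by simp; omega) (by simp; omega)
    (by simp; omega) (by simp; omega) (by simp; omega) (by simp; omega) (by simp; omega)
    (by simp; omega) (by simp; omega) (by simp; omega)]
  have hptw : ∀ x : ℝ × ℝ × ℝ, e3 (j + -l) x
      = cexp (2*(Real.pi:ℂ)*I*(((j+-l).1:ℤ)*x.1))
        * (cexp (2*(Real.pi:ℂ)*I*(((j+-l).2.1:ℤ)*x.2.1)) * cexp (2*(Real.pi:ℂ)*I*(((j+-l).2.2:ℤ)*x.2.2))) := by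
    intro x
    rw [e3, ← Complex.exp_add, ← Complex.exp_add]
    congr 1
    ring
  rw [show (∫ x in Set.Icc ((-(1:ℝ)/2, -(1:ℝ)/2, -(1:ℝ)/2)) (((1:ℝ)/2, (1:ℝ)/2, (1:ℝ)/2)), e3 (j + -l) x)
      = ∫ x in Set.Icc ((-(1:ℝ)/2, -(1:ℝ)/2, -(1:ℝ)/2)) (((1:ℝ)/2, (1:ℝ)/2, (1:ℝ)/2)),
          cexp (2*(Real.pi:ℂ)*I*(((j+-l).1:ℤ)*x.1))
            * (cexp (2*(Real.pi:ℂ)*I*(((j+-l).2.1:ℤ)*x.2.1)) * cexp (2*(Real.pi:ℂ)*I*(((j+-l).2.2:ℤ)*x.2.2)))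
      from setIntegral_congr_fun measurableSet_Icc (fun x _ => hptw x)]
  rw [integral_e3' (j + -l)]
  by_cases h : j + -l = 0
  · rw [if_pos h]
    have h1 : (j + -l).1 = 0 := by rw [h]; rfl
    have h2 : (j + -l).2.1 = 0 := by rw [h]; rfl
    have h3 : (j + -l).2.2 = 0 := by rw [h]; rfl
    rw [if_pos h1, if_pos h2, if_pos h3]
    field_simp
  · rw [if_neg h]
    have : ¬((j + -l).1 = 0) ∨ ¬((j + -l).2.1 = 0) ∨ ¬((j + -l).2.2 = 0) := by
      by_contra hc
      push_neg at hc
      exact h (Prod.ext hc.1 (Prod.ext hc.2.1 hc.2.2))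
    rcases this with h' | h' | h'
    · rw [if_neg h']; simp
    · rw [if_neg h']; simp
    · rw [if_neg h']; simp

theorem discrete_inner_product_eq_integral_3d (n : ℕ) (hn : 0 < n)
    (f g : ℝ × ℝ × ℝ → ℂ)
    (hf : f ∈ Submodule.span ℂ (e3 '' (LamDag n : Set (ℤ × ℤ × ℤ))))
    (hg : g ∈ Submodule.span ℂ (e3 '' (LamDag n : Set (ℤ × ℤ × ℤ)))) :
    (1 / (2 * (n : ℂ) ^ 3)) * ∑ k ∈ X3 n, f (pt3 n k) * star (g (pt3 n k))
      = ∫ x in Set.Icc ((-(1:ℝ)/2, -(1:ℝ)/2, -(1:ℝ)/2)) (((1:ℝ)/2, (1:ℝ)/2, (1:ℝ)/2)), f x * star (g x) := by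
  rw [Submodule.mem_span_set'] at hf hg
  obtain ⟨N, c, v, hfeq⟩ := hf
  obtain ⟨M, d, w, hgeq⟩ := hg
  have hv : ∀ i, ∃ k, k ∈ LamDag n ∧ e3 k = (v i : (ℝ × ℝ × ℝ) → ℂ) := by
    intro i
    obtain ⟨k, hk, hke⟩ := (v i).2
    exact ⟨k, hk, hke⟩
  have hw : ∀ i, ∃ k, k ∈ LamDag n ∧ e3 k = (w i : (ℝ × ℝ × ℝ) → ℂ) := by
    intro i
    obtain ⟨k, hk, hke⟩ := (w i).2
    exact ⟨k, hk, hke⟩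
  choose jj hjmem hje using hv
  choose ll hlmem hle using hw
  have hfx : ∀ x, f x = ∑ i, c i * e3 (jj i) x := by
    intro x
    rw [← hfeq]
    simp [Finset.sum_apply, Pi.smul_apply, smul_eq_mul, hje]
  have hgx : ∀ x, g x = ∑ i, d i * e3 (ll i) x := by
    intro x
    rw [← hgeq]
    simp [Finset.sum_apply, Pi.smul_apply, smul_eq_mul, hle]
  have hptw : ∀ x : ℝ × ℝ × ℝ, f x * star (g x)
      = ∑ i : Fin N, ∑ i' : Fin M,
          c i * star (d i') * (e3 (jj i) x * star (e3 (ll i') x)) := by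
    intro x
    rw [hfx, hgx, star_sum, Finset.sum_mul_sum]
    refine Finset.sum_congr rfl fun i _ => Finset.sum_congr rfl fun i' _ => ?_
    rw [star_mul']
    ring
  have hLHS : (1 / (2 * (n : ℂ) ^ 3)) * ∑ k ∈ X3 n, f (pt3 n k) * star (g (pt3 n k))
      = ∑ i : Fin N, ∑ i' : Fin M, c i * star (d i')
          * ((1 / (2 * (n : ℂ) ^ 3)) * ∑ k ∈ X3 n, e3 (jj i) (pt3 n k) * star (e3 (ll i') (pt3 n k))) := by
    simp only [hptw]
    rw [Finset.sum_comm]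
    simp only [Finset.mul_sum]
    refine Finset.sum_congr rfl fun i _ => ?_
    rw [Finset.sum_comm]
    exact Finset.sum_congr rfl fun i' _ => Finset.sum_congr rfl fun k _ => by ring
  rw [hLHS]
  rw [setIntegral_congr_fun measurableSet_Icc (fun x _ => hptw x)]
  rw [integral_finset_sum]
  · refine Finset.sum_congr rfl fun i _ => ?_
    rw [integral_finset_sum]
    · refine Finset.sum_congr rfl fun i' _ => ?_
      rw [key_lemma n hn (jj i) (ll i') (hjmem i) (hlmem i'), integral_const_mul]
    · intro i' _
      exact cube_integrable _ (continuous_const.mul ((continuous_e3 _).mul (continuous_e3 _).star))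
  · intro i _
    apply integrable_finset_sum
    intro i' _
    exact cube_integrable _ (continuous_const.mul ((continuous_e3 _).mul (continuous_e3 _).star))
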